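/- Let A be a directed-complete generalized ultrametric semilattice with distance set P, let F : A → A be contracting and strictly contracting on orbits, let a be a post-fixed point of F, and let g be a function from ordinals to A such that g(0) = a, g(α+1) = F(g(α)) ⊓ F(F(g(α))) for every ordinal α, and for every limit ordinal λ, g(λ) is a least upper bound of {g(β) : β < λ} in (A, ⊑). Let κ be an ordinal such that there is no strictly order-preserving map from the ordinals below κ into (A, ⊑) (i.e., no function φ from {β : β < κ} to A with φ(β) ⊑ φ(γ) and φ(β) ≠ φ(γ) whenever β < γ < κ). Then g(κ) is a fixed point of F, i.e., F(g(κ)) = g(κ). -/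

import Mathlib

/-- A generalized ultrametric semilattice over a meet-semilattice `A`
(with induced order `a ⊑ b ↔ a ⊓ b = a`, i.e. the `≤` of `SemilatticeInf`)
and a pointed partially ordered distance set `P` with least element `⊥`. -/
structure GUSemilattice (A : Type*) (P : Type*) [SemilatticeInf A] [PartialOrder P] [OrderBot P] where
  d : A → A → P
  d_eq_bot_iff : ∀ a₁ a₂ : A, d a₁ a₂ = ⊥ ↔ a₁ = a₂
  d_symm : ∀ a₁ a₂ : A, d a₁ a₂ = d a₂ a₁
  d_ultra : ∀ (a₁ a₂ a₃ : A) (p : P), d a₁ a₂ ≤ p → d a₂ a₃ ≤ p → d a₁ a₃ ≤ p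
  inf_le_inf_of_d_le : ∀ a₁ a₂ a₃ : A, d a₁ a₂ ≤ d a₁ a₃ → a₁ ⊓ a₃ ≤ a₁ ⊓ a₂
  d_inf_inf_le : ∀ a₁ a₂ a₃ : A, d (a₁ ⊓ a₂) (a₁ ⊓ a₃) ≤ d a₂ a₃

variable {A P : Type*} [SemilatticeInf A] [PartialOrder P] [OrderBot P]

/-- `F` is contracting. -/
def GUSemilattice.Contracting (S : GUSemilattice A P) (F : A → A) : Prop :=
  ∀ a₁ a₂ : A, S.d (F a₁) (F a₂) ≤ S.d a₁ a₂

/-- `F` is strictly contracting. -/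
def GUSemilattice.StrictlyContracting (S : GUSemilattice A P) (F : A → A) : Prop :=
  ∀ a₁ a₂ : A, a₁ ≠ a₂ → S.d (F a₁) (F a₂) < S.d a₁ a₂

/-- `F` is strictly contracting on orbits. -/
def GUSemilattice.StrictlyContractingOnOrbits (S : GUSemilattice A P) (F : A → A) : Prop :=
  ∀ a : A, a ≠ F a → S.d (F a) (F (F a)) < S.d a (F a)

/-- A ball in the generalized ultrametric space associated with `S`. -/
def GUSemilattice.IsBall (S : GUSemilattice A P) (B : Set A) : Prop :=
  ∃ (a : A) (p : P), B = {x : A | S.d x a ≤ p}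

/-- Spherical completeness: every nonempty chain of balls has nonempty intersection. -/
def GUSemilattice.SphericallyComplete (S : GUSemilattice A P) : Prop :=
  ∀ C : Set (Set A), C.Nonempty → IsChain (· ⊆ ·) C → (∀ B ∈ C, S.IsBall B) → (⋂₀ C).Nonempty

/-- Directed-completeness: every nonempty directed subset has a least upper bound. -/
def DirectedComplete (A : Type*) [Preorder A] : Prop :=
  ∀ D : Set A, D.Nonempty → DirectedOn (· ≤ ·) D → ∃ s : A, IsLUB D s

section Auxiliary

variable (S : GUSemilattice A P)

/-- Sandwich lemma: if `x ≤ m ≤ u` then `d x m ≤ d x u`. -/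
private lemma GUS_sandwich {x m u : A} (h1 : x ≤ m) (h2 : m ≤ u) :
    S.d x m ≤ S.d x u := by
  have h := S.d_inf_inf_le m x u
  rwa [inf_eq_right.mpr h1, inf_eq_left.mpr h2] at h

variable {F : A → A}

/-- If `b` is post-fixed, then `b ≤ F b ⊓ F (F b)`. -/
private lemma GUS_le_step (hF : S.Contracting F) {b : A} (hb : b ≤ F b) :
    b ≤ F b ⊓ F (F b) := by
  have h1 : S.d (F b) (F (F b)) ≤ S.d (F b) b := by
    have h := hF b (F b)
    rwa [S.d_symm b (F b)] at h
  have h2 := S.inf_le_inf_of_d_le (F b) (F (F b)) b h1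
  calc b = F b ⊓ b := (inf_eq_right.mpr hb).symm
    _ ≤ F b ⊓ F (F b) := h2

/-- `F b ⊓ F (F b)` is always a post-fixed point. -/
private lemma GUS_step_post (hF : S.Contracting F) (b : A) :
    F b ⊓ F (F b) ≤ F (F b ⊓ F (F b)) := by
  have h1 : S.d (F b ⊓ F (F b)) (F b) ≤ S.d (F (F b)) (F b) := by
    have h := S.d_inf_inf_le (F b) (F (F b)) (F b)
    rwa [inf_idem] at h
  have h2 : S.d (F (F b ⊓ F (F b))) (F (F b)) ≤ S.d (F (F b)) (F b) :=
    le_trans (hF (F b ⊓ F (F b)) (F b)) h1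
  have h3 : S.d (F (F b)) (F (F b ⊓ F (F b))) ≤ S.d (F (F b)) (F b) := by
    rwa [S.d_symm (F (F b)) (F (F b ⊓ F (F b)))]
  have h4 := S.inf_le_inf_of_d_le (F (F b)) (F (F b ⊓ F (F b))) (F b) h3
  calc F b ⊓ F (F b) = F (F b) ⊓ F b := inf_comm _ _
    _ ≤ F (F b) ⊓ F (F b ⊓ F (F b)) := h4
    _ ≤ F (F b ⊓ F (F b)) := inf_le_right

/-- Limit lemma: a least upper bound of a set of post-fixed points is post-fixed. -/
private lemma GUS_lub_post (hF : S.Contracting F) {D : Set A} {s : A}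
    (hs : IsLUB D s) (hD : ∀ b ∈ D, b ≤ F b) : s ≤ F s := by
  have hub : ∀ b ∈ D, b ≤ s ⊓ F s := by
    intro b hb
    have hbs : b ≤ s := hs.1 hb
    have hbF : b ≤ F b := hD b hb
    have hw : b ≤ s ⊓ F b := le_inf hbs hbF
    have h1 : S.d b (s ⊓ F b) ≤ S.d b s := GUS_sandwich S hw inf_le_left
    have h2 : S.d (s ⊓ F b) (s ⊓ F s) ≤ S.d b s :=
      le_trans (S.d_inf_inf_le s (F b) (F s)) (hF b s)
    have h3 : S.d b (s ⊓ F s) ≤ S.d b s := S.d_ultra _ _ _ _ h1 h2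
    have h4 := S.inf_le_inf_of_d_le b (s ⊓ F s) s h3
    rw [inf_eq_left.mpr hbs] at h4
    exact le_trans h4 inf_le_right
  exact le_trans (hs.2 hub) inf_le_right

/-- Stall lemma: if `b = F b ⊓ F (F b)` then `b` is a fixed point of `F`. -/
private lemma GUS_stall_fixed (hFo : S.StrictlyContractingOnOrbits F) {b : A}
    (hb : b = F b ⊓ F (F b)) : F b = b := by
  by_contra hne
  have hlt := hFo b (fun h => hne h.symm)
  have h : S.d b (F b) ≤ S.d (F b) (F (F b)) := by
    have h := S.d_inf_inf_le (F b) (F (F b)) (F b)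
    rw [inf_idem, ← hb] at h
    rwa [S.d_symm (F (F b)) (F b)] at h
  exact absurd (lt_of_le_of_lt h hlt) (lt_irrefl _)

end Auxiliary

theorem transfinite_iteration_reaches_fixedPoint
    (S : GUSemilattice A P) (hdc : DirectedComplete A)
    (F : A → A) (hF : S.Contracting F)
    (hFo : S.StrictlyContractingOnOrbits F)
    (a : A) (ha : a ≤ F a)
    (g : Ordinal → A)
    (hg0 : g 0 = a)
    (hgsucc : ∀ α : Ordinal, g (α + 1) = F (g α) ⊓ F (F (g α)))
    (hglim : ∀ l : Ordinal, Order.IsSuccLimit l → IsLUB (g '' Set.Iio l) (g l))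
    (κ : Ordinal)
    (hκ : ¬ ∃ φ : Ordinal → A,
      ∀ β γ : Ordinal, β < γ → γ < κ → φ β ≤ φ γ ∧ φ β ≠ φ γ) :
    F (g κ) = g κ := by
  -- every iterate is a post-fixed point
  have post : ∀ α : Ordinal, g α ≤ F (g α) := by
    intro α
    induction α using Ordinal.induction with
    | _ α IH =>
      rcases Ordinal.zero_or_succ_or_isSuccLimit α with h0 | ⟨β, hβ⟩ | hl
      · rw [h0, hg0]; exact ha
      · rw [← hβ, ← Ordinal.add_one_eq_succ, hgsucc]
        exact GUS_step_post S hF (g β)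
      · refine GUS_lub_post S hF (hglim α hl) ?_
        rintro b ⟨δ, hδ, rfl⟩
        exact IH δ hδ
  -- the iteration is monotone
  have mono : ∀ γ β : Ordinal, β ≤ γ → g β ≤ g γ := by
    intro γ
    induction γ using Ordinal.induction with
    | _ γ IH =>
      intro β hβ
      rcases eq_or_lt_of_le hβ with rfl | hlt
      · exact le_rfl
      rcases Ordinal.zero_or_succ_or_isSuccLimit γ with h0 | ⟨ε, hε⟩ | hl
      · exact absurd hlt (by simp [h0])
      · subst hε
        have hβε : β ≤ ε := Order.lt_succ_iff.mp hlt
        have h1 : g β ≤ g ε := IH ε (Order.lt_succ ε) β hβε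
        have h2 : g ε ≤ g (ε + 1) := by
          rw [hgsucc]; exact GUS_le_step S hF (post ε)
        rw [← Ordinal.add_one_eq_succ]
        exact h1.trans h2
      · exact (hglim γ hl).1 ⟨β, hlt, rfl⟩
  -- by `hκ`, the iteration must stall strictly below `κ`
  have key : ∃ β γ : Ordinal, β < γ ∧ γ < κ ∧ g β = g γ := by
    by_contra h
    push_neg at h
    exact hκ ⟨g, fun β γ h1 h2 => ⟨mono γ β h1.le, h β γ h1 h2⟩⟩
  obtain ⟨β, γ, hβγ, hγκ, heq⟩ := key
  have hsucc_le : β + 1 ≤ γ := by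
    rw [Ordinal.add_one_eq_succ]; exact Order.succ_le_of_lt hβγ
  have hstall : g β = g (β + 1) := by
    refine le_antisymm ?_ ?_
    · rw [hgsucc]; exact GUS_le_step S hF (post β)
    · have h1 : g (β + 1) ≤ g γ := mono γ (β + 1) hsucc_le
      exact h1.trans_eq heq.symm
  have hfix : F (g β) = g β :=
    GUS_stall_fixed S hFo (hstall.trans (hgsucc β))
  -- the iteration is constant from `β` on
  have hconst : ∀ δ : Ordinal, β ≤ δ → g δ = g β := by
    intro δ
    induction δ using Ordinal.induction with
    | _ δ IH =>
      intro hβδ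
      rcases eq_or_lt_of_le hβδ with rfl | hlt
      · rfl
      rcases Ordinal.zero_or_succ_or_isSuccLimit δ with h0 | ⟨ε, hε⟩ | hl
      · exact absurd hlt (by simp [h0])
      · subst hε
        have hβε : β ≤ ε := Order.lt_succ_iff.mp hlt
        have hgε : g ε = g β := IH ε (Order.lt_succ ε) hβε
        rw [← Ordinal.add_one_eq_succ, hgsucc, hgε, hfix, hfix, inf_idem]
      · have h1 := hglim δ hl
        refine le_antisymm ?_ (h1.1 ⟨β, hlt, rfl⟩)
        apply h1.2
        rintro y ⟨ε, hε, rfl⟩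
        rcases le_or_gt ε β with h | h
        · exact mono β ε h
        · exact le_of_eq (IH ε hε h.le)
  have hκβ : g κ = g β := hconst κ (hβγ.trans hγκ).le
  rw [hκβ, hfix]
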